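/- Let G be a strongly connected signed digraph on a finite vertex set V with |V| = n, without positive cycles, whose underlying digraph is not a cycle. If there is a set of at most one vertex meeting every cycle of G (i.e., the minimum size of a feedback vertex set of G is at most 1), then there is a single word w of length at most 3n − 1 which synchronizes every and-or-net on G. -/

import Mathlib

/-- A signed digraph on vertex set `V`, given by its positive and negative arc relations. -/
structure SignedDigraph (V : Type*) where
  pos : V → V → Prop
  neg : V → V → Prop

/-- The last vertex of a walk starting at `u` with the given steps. -/
def walkEnd {V : Type*} (u : V) (steps : List (V × Bool)) : V :=
  (steps.map Prod.fst).getLastD u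

/-- The sign of a walk (`true` = positive): positive iff the number of
negative (`false`) arcs is even. -/
def walkSign {V : Type*} (steps : List (V × Bool)) : Bool :=
  steps.foldl (fun acc step => acc == step.2) true

namespace SignedDigraph

variable {V : Type*}

/-- Arc of the underlying digraph. -/
def Arc (G : SignedDigraph V) (j i : V) : Prop := G.pos j i ∨ G.neg j i

/-- `G.IsWalk u steps`: `steps` is a list of (next vertex, sign of arc) pairs
describing a walk in `G` starting at `u`. -/
def IsWalk (G : SignedDigraph V) : V → List (V × Bool) → Prop
  | _, [] => True
  | u, step :: rest =>
      (if step.2 then G.pos u step.1 else G.neg u step.1) ∧ G.IsWalk step.1 rest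

/-- A (simple) path from `u`: a walk with pairwise distinct vertices. -/
def IsPath (G : SignedDigraph V) (u : V) (steps : List (V × Bool)) : Prop :=
  G.IsWalk u steps ∧ (u :: steps.map Prod.fst).Nodup

/-- A (simple) path from `u` to `v`. -/
def IsPathFrom (G : SignedDigraph V) (u : V) (steps : List (V × Bool)) (v : V) : Prop :=
  G.IsPath u steps ∧ walkEnd u steps = v

/-- A cycle through `u`: a nonempty closed walk from `u` back to `u` with no repeated
vertex except the endpoint. -/
def IsCycle (G : SignedDigraph V) (u : V) (steps : List (V × Bool)) : Prop :=
  steps ≠ [] ∧ G.IsWalk u steps ∧ walkEnd u steps = u ∧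
    (u :: (steps.map Prod.fst).dropLast).Nodup

/-- `G` has no positive cycle. -/
def NoPositiveCycle (G : SignedDigraph V) : Prop :=
  ∀ u steps, G.IsCycle u steps → walkSign steps = false

/-- `G` has no negative cycle. -/
def NoNegativeCycle (G : SignedDigraph V) : Prop :=
  ∀ u steps, G.IsCycle u steps → walkSign steps = true

/-- Reachability in the underlying digraph. -/
def Reach (G : SignedDigraph V) (u v : V) : Prop :=
  ∃ steps, G.IsWalk u steps ∧ walkEnd u steps = v

/-- The underlying digraph of `G` is strongly connected. -/
def StronglyConnected (G : SignedDigraph V) : Prop := ∀ u v, G.Reach u v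

/-- `u` and `v` lie in the same strong component. -/
def SameComp (G : SignedDigraph V) (u v : V) : Prop := G.Reach u v ∧ G.Reach v u

/-- The strong component of `u`. -/
def comp (G : SignedDigraph V) (u : V) : Set V := {v | G.SameComp u v}

/-- The in-degree of `i`: the number of arcs (with their signs) entering `i`. -/
noncomputable def inDegree (G : SignedDigraph V) (i : V) : ℕ :=
  {j | G.pos j i}.ncard + {j | G.neg j i}.ncard

/-- A source: a vertex with no in-coming arc. -/
def IsSource (G : SignedDigraph V) (i : V) : Prop := ∀ j, ¬ G.Arc j i

/-- `G` has no sources. -/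
def NoSource (G : SignedDigraph V) : Prop := ∀ i, ¬ G.IsSource i

/-- The subgraph induced on a set `S` of vertices. -/
def induce (G : SignedDigraph V) (S : Set V) : SignedDigraph V where
  pos j i := j ∈ S ∧ i ∈ S ∧ G.pos j i
  neg j i := j ∈ S ∧ i ∈ S ∧ G.neg j i

/-- The underlying digraph of `G` restricted to `S` is a cycle: `S` is nonempty,
every vertex of `S` has exactly one in-coming arc inside `S`, and `S` is strongly
connected inside `S`. -/
def IsCycleGraphOn (G : SignedDigraph V) (S : Set V) : Prop :=
  S.Nonempty ∧ (∀ i ∈ S, (G.induce S).inDegree i = 1) ∧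
    ∀ u ∈ S, ∀ v ∈ S, (G.induce S).Reach u v

/-- The underlying digraph of `G` is a cycle. -/
def IsCycleGraph (G : SignedDigraph V) : Prop := G.IsCycleGraphOn Set.univ

/-- `S` is an initial strong component of `G`. -/
def IsInitialComponent (G : SignedDigraph V) (S : Set V) : Prop :=
  (∃ u, S = G.comp u) ∧ ∀ j i, i ∈ S → G.Arc j i → j ∈ S

/-- `G` has an initial cycle: an initial strong component whose underlying digraph
is a cycle. -/
def HasInitialCycle (G : SignedDigraph V) : Prop :=
  ∃ S : Set V, G.IsInitialComponent S ∧ G.IsCycleGraphOn S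

/-- A forward path: a nonempty path whose last arc joins two distinct strong
components. -/
def IsForwardPath (G : SignedDigraph V) (u : V) (steps : List (V × Bool)) (v : V) : Prop :=
  G.IsPathFrom u steps v ∧ steps ≠ [] ∧ ¬ G.SameComp (walkEnd u steps.dropLast) v

/-- `G` is `i`-homogenous: every strong component contains a vertex `j` such that
all forward paths from `j` to `i` have the same sign. -/
def IsHomogenousAt (G : SignedDigraph V) (i : V) : Prop :=
  ∀ u : V, ∃ j, G.SameComp u j ∧
    ∀ steps₁ steps₂, G.IsForwardPath j steps₁ i → G.IsForwardPath j steps₂ i →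
      walkSign steps₁ = walkSign steps₂

/-- `G` is homogenous. -/
def IsHomogenous (G : SignedDigraph V) : Prop := ∀ i, G.IsHomogenousAt i

/-- `G` is simple: no pair of parallel arcs of opposite signs. -/
def IsSimple (G : SignedDigraph V) : Prop := ∀ j i, ¬ (G.pos j i ∧ G.neg j i)

end SignedDigraph

section BooleanNetwork

variable {V : Type*} [DecidableEq V]

/-- Asynchronous update of component `i` of the Boolean network `f`. -/
def localUpdate (f : (V → Bool) → V → Bool) (i : V) (x : V → Bool) : V → Bool :=
  Function.update x i (f x i)

/-- `f^w` : for `w = i₁,…,i_ℓ`, `wordUpdate f w = f^{i_ℓ} ∘ ⋯ ∘ f^{i₁}`. -/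
def wordUpdate (f : (V → Bool) → V → Bool) (w : List V) (x : V → Bool) : V → Bool :=
  w.foldl (fun y i => localUpdate f i y) x

/-- `w` is a synchronizing word for `f`: `f^w` is constant. -/
def SyncWord (f : (V → Bool) → V → Bool) (w : List V) : Prop :=
  ∃ c : V → Bool, ∀ x, wordUpdate f w x = c

/-- `f` is synchronizing. -/
def Synchronizing (f : (V → Bool) → V → Bool) : Prop := ∃ w, SyncWord f w

/-- Positive arc of the signed interaction digraph of `f`. -/
def posIArc (f : (V → Bool) → V → Bool) (j i : V) : Prop :=
  ∃ x : V → Bool, x j = false ∧ f x i = false ∧ f (Function.update x j true) i = true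

/-- Negative arc of the signed interaction digraph of `f`. -/
def negIArc (f : (V → Bool) → V → Bool) (j i : V) : Prop :=
  ∃ x : V → Bool, x j = false ∧ f x i = true ∧ f (Function.update x j true) i = false

/-- `f` is a Boolean network on `G`: the signed interaction digraph of `f` is `G`. -/
def IsBNOn (f : (V → Bool) → V → Bool) (G : SignedDigraph V) : Prop :=
  (∀ j i, G.pos j i ↔ posIArc f j i) ∧ (∀ j i, G.neg j i ↔ negIArc f j i)

/-- Component `i` of `f` is a conjunction with respect to `G`. -/
def IsConjunction (G : SignedDigraph V) (f : (V → Bool) → V → Bool) (i : V) : Prop :=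
  ∀ x : V → Bool, (f x i = true ↔
    (∀ j, G.pos j i → x j = true) ∧ (∀ j, G.neg j i → x j = false))

/-- Component `i` of `f` is a disjunction with respect to `G`. -/
def IsDisjunction (G : SignedDigraph V) (f : (V → Bool) → V → Bool) (i : V) : Prop :=
  ∀ x : V → Bool, (f x i = false ↔
    (∀ j, G.pos j i → x j = false) ∧ (∀ j, G.neg j i → x j = true))

/-- `f` is an and-or-net on `G`. -/
def IsAndOrNet (G : SignedDigraph V) (f : (V → Bool) → V → Bool) : Prop :=
  IsBNOn f G ∧ ∀ i, IsConjunction G f i ∨ IsDisjunction G f i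

/-- `f` is the and-net on `G`. -/
def IsAndNet (G : SignedDigraph V) (f : (V → Bool) → V → Bool) : Prop :=
  IsBNOn f G ∧ ∀ i, IsConjunction G f i

/-- `w` is a canalizing word from `(i, a)` with image `b`. -/
def Canalizing (f : (V → Bool) → V → Bool) (i : V) (a : Bool) (w : List V)
    (b : V → Bool) : Prop :=
  i ∉ w ∧ w.Nodup ∧ ∀ x : V → Bool, x i = a → ∀ j ∈ w, wordUpdate f w x j = b j

end BooleanNetwork


/-! ### Auxiliary lemmas -/

section Aux

variable {V : Type*}

theorem walkEnd_nil (u : V) : walkEnd u ([] : List (V × Bool)) = u := rfl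

theorem walkEnd_cons (u : V) (st : V × Bool) (rest : List (V × Bool)) :
    walkEnd u (st :: rest) = walkEnd st.1 rest := by
  simp only [walkEnd, List.map_cons, List.getLastD_cons]

theorem walkEnd_append (u : V) (a b : List (V × Bool)) :
    walkEnd u (a ++ b) = walkEnd (walkEnd u a) b := by
  induction a generalizing u with
  | nil => rfl
  | cons st rest ih => simp only [List.cons_append, walkEnd_cons, ih]

theorem walkEnd_singleton (u : V) (st : V × Bool) : walkEnd u [st] = st.1 := rfl

theorem walkSign_foldl_shift (c : Bool) (l : List (V × Bool)) :
    l.foldl (fun acc step => acc == step.2) c = (c == walkSign l) := by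
  induction l generalizing c with
  | nil => simp [walkSign]
  | cons st rest ih =>
      simp only [walkSign, List.foldl_cons] at *
      rw [ih (c == st.2), ih (true == st.2)]
      cases c <;> cases st.2 <;> simp

theorem walkSign_append (a b : List (V × Bool)) :
    walkSign (a ++ b) = (walkSign a == walkSign b) := by
  simp only [walkSign, List.foldl_append]
  exact walkSign_foldl_shift _ b

theorem walkSign_singleton (st : V × Bool) : walkSign [st] = st.2 := by
  simp [walkSign]

namespace SignedDigraph

variable {G : SignedDigraph V}

theorem isWalk_append {u : V} {a b : List (V × Bool)} :
    G.IsWalk (u) (a ++ b) ↔ G.IsWalk u a ∧ G.IsWalk (walkEnd u a) b := by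
  induction a generalizing u with
  | nil => simp [IsWalk, walkEnd_nil]
  | cons st rest ih => simp [IsWalk, ih, walkEnd_cons, and_assoc]

theorem IsWalk.arc {u : V} {st : V × Bool} {rest : List (V × Bool)}
    (h : G.IsWalk u (st :: rest)) : G.Arc u st.1 := by
  rcases h with ⟨h1, -⟩
  cases hs : st.2 <;> rw [hs] at h1 <;> simp at h1
  · exact Or.inr h1
  · exact Or.inl h1

theorem IsWalk.tail {u : V} {st : V × Bool} {rest : List (V × Bool)}
    (h : G.IsWalk u (st :: rest)) : G.IsWalk st.1 rest := h.2

theorem isWalk_chain {u : V} {steps : List (V × Bool)} (h : G.IsWalk u steps) :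
    List.Chain G.Arc u (steps.map Prod.fst) := by
  induction steps generalizing u with
  | nil => exact List.Chain.nil
  | cons st rest ih => exact List.Chain.cons h.arc (ih h.2)

open Classical in
/-- choose signs to turn a chain of arcs into a walk -/
noncomputable def mkSteps (G : SignedDigraph V) : V → List V → List (V × Bool)
  | _, [] => []
  | u, a :: l => (a, if G.pos u a then true else false) :: mkSteps G a l

theorem mkSteps_map_fst (G : SignedDigraph V) (u : V) (l : List V) :
    (mkSteps G u l).map Prod.fst = l := by
  induction l generalizing u with
  | nil => rfl
  | cons a l ih => simp [mkSteps, ih]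

theorem mkSteps_isWalk {u : V} {l : List V} (h : List.Chain G.Arc u l) :
    G.IsWalk u (mkSteps G u l) := by
  induction l generalizing u with
  | nil => trivial
  | cons a l ih =>
      obtain ⟨harc, hrest⟩ := List.isChain_cons_cons.1 h
      refine ⟨?_, ih hrest⟩
      by_cases hp : G.pos u a
      · simp [mkSteps, hp]
      · rcases harc with h | h
        · exact absurd h hp
        · simp [mkSteps, hp, h]

theorem mkSteps_walkEnd (G : SignedDigraph V) (u : V) (l : List V) :
    walkEnd u (mkSteps G u l) = l.getLastD u := by
  unfold walkEnd
  rw [mkSteps_map_fst]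

end SignedDigraph

theorem exists_dup_split {l : List V} (h : ¬ l.Nodup) :
    ∃ (a : V) (l1 l2 l3 : List V), l = l1 ++ a :: l2 ++ a :: l3 := by
  induction l with
  | nil => simp at h
  | cons b t ih =>
      rw [List.nodup_cons] at h
      push_neg at h
      by_cases hb : b ∈ t
      · obtain ⟨t1, t2, rfl⟩ := List.append_of_mem hb
        exact ⟨b, [], t1, t2, rfl⟩
      · obtain ⟨a, l1, l2, l3, rfl⟩ := ih (h hb)
        exact ⟨a, b :: l1, l2, l3, rfl⟩

theorem chain_append_single {r : V → V → Prop} {u c : V} {l : List V}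
    (h : List.Chain r u l) (hc : r (l.getLastD u) c) : List.Chain r u (l ++ [c]) := by
  induction l generalizing u with
  | nil => exact List.Chain.cons hc List.Chain.nil
  | cons a t ih =>
      obtain ⟨h1, h2⟩ := List.isChain_cons_cons.1 h
      exact List.Chain.cons h1 (ih h2 (by rwa [List.getLastD_cons] at hc))

theorem transGen_exists_chain {r : V → V → Prop} {a b : V} (h : Relation.TransGen r a b) :
    ∃ l : List V, l ≠ [] ∧ List.Chain r a l ∧ l.getLastD a = b := by
  induction h with
  | single h => exact ⟨[_], by simp, List.Chain.cons h List.Chain.nil, rfl⟩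
  | tail _ h ih =>
      obtain ⟨l, hne, hch, hlast⟩ := ih
      refine ⟨l ++ [_], by simp, chain_append_single hch (hlast ▸ h), ?_⟩
      simp [List.getLastD_concat]

end Aux

section GraphLayer

variable {V : Type*} {G : SignedDigraph V} {v : V}

/-- arcs avoiding `v` -/
def DArc (G : SignedDigraph V) (v : V) (j i : V) : Prop :=
  j ≠ v ∧ i ≠ v ∧ G.Arc j i

theorem dropLast_append_getLastD {l : List V} (h : l ≠ []) (d : V) :
    l.dropLast ++ [l.getLastD d] = l := by
  induction l generalizing d with
  | nil => simp at h
  | cons a t ih =>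
      cases t with
      | nil => simp
      | cons b t' =>
          rw [List.getLastD_cons]
          simpa using ih (by simp) a

theorem vfree_closed_false
    (hv : ∀ u steps, G.IsCycle u steps → v ∈ u :: steps.map Prod.fst) :
    ∀ (m : ℕ) (u : V) (l : List V), l.length ≤ m → u ≠ v → (∀ x ∈ l, x ≠ v) →
      l ≠ [] → List.Chain G.Arc u l → l.getLastD u = u → False := by
  intro m
  induction m with
  | zero =>
      intro u l hlen _ _ hne _ _
      cases l with
      | nil => exact hne rfl
      | cons a t => simp at hlen
  | succ m ih =>
      intro u l hlen hu hall hne hch hlast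
      by_cases hnd : (u :: l.dropLast).Nodup
      · have hcyc : G.IsCycle u (SignedDigraph.mkSteps G u l) := by
          refine ⟨?_, SignedDigraph.mkSteps_isWalk hch, ?_, ?_⟩
          · intro h
            apply hne
            have := SignedDigraph.mkSteps_map_fst G u l
            rw [h] at this
            exact this.symm
          · rw [SignedDigraph.mkSteps_walkEnd]; exact hlast
          · rw [SignedDigraph.mkSteps_map_fst]; exact hnd
        have hvmem := hv u _ hcyc
        rw [SignedDigraph.mkSteps_map_fst] at hvmem
        rcases List.mem_cons.1 hvmem with h | h
        · exact hu h.symm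
        · exact hall v h rfl
      · -- find a duplicate, splice a shorter v-free closed chain
        obtain ⟨a, l1, l2, l3, hsplit⟩ := exists_dup_split hnd
        have hlfull : l = l.dropLast ++ [u] := by
          conv_lhs => rw [← dropLast_append_getLastD hne u, hlast]
        have hdllen : l.dropLast.length = l.length - 1 := List.length_dropLast
        have hlpos : 1 ≤ l.length := List.length_pos_iff.2 hne
        have key : ∀ (x : V) (lx : List V), x ≠ v → (∀ y ∈ lx, y ≠ v) →
            List.Chain G.Arc x (lx ++ [x]) → lx.length + 1 ≤ m → False := by
          intro x lx hx hlx hchx hlenx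
          refine ih x (lx ++ [x]) (by simpa using hlenx) hx ?_ (by simp) hchx
            (by simp [List.getLastD_concat])
          intro y hy
          rcases List.mem_append.1 hy with h | h
          · exact hlx y h
          · simp at h; subst h; exact hx
        have hsubdl : ∀ y ∈ l.dropLast, y ≠ v := fun y hy => hall y (List.dropLast_subset l hy)
        cases l1 with
        | nil =>
            rw [List.nil_append] at hsplit
            injection hsplit with hua hdl
            subst hua
            have hl : l = l2 ++ u :: (l3 ++ [u]) := by
              conv_lhs => rw [hlfull, hdl]
              simp
            rw [hl] at hch
            have hch2 := (List.isChain_cons_split.1 hch).2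
            refine key u l3 hu (fun y hy => hsubdl y (by rw [hdl]; simp [hy])) hch2 ?_
            have : l.dropLast.length = l2.length + l3.length + 1 := by rw [hdl]; simp; omega
            omega
        | cons b l1' =>
            simp only [List.cons_append] at hsplit
            injection hsplit with hua hdl
            subst hua
            have hl : l = l1' ++ a :: (l2 ++ a :: (l3 ++ [u])) := by
              conv_lhs => rw [hlfull, hdl]
              simp
            rw [hl] at hch
            have hch2 := (List.isChain_cons_split.1 hch).2
            have hane : a ≠ v := hsubdl a (by rw [hdl]; simp)
            refine key a l2 hane (fun y hy => hsubdl y (by rw [hdl]; simp [hy]))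
              ((List.isChain_cons_split (l₁ := l2) (c := a) (l₂ := l3 ++ [u])).1 hch2).1 ?_
            have : l.dropLast.length = l1'.length + l2.length + l3.length + 2 := by
              rw [hdl]; simp; omega
            omega

end GraphLayer

section GraphLayer2

variable {V : Type*} {G : SignedDigraph V} {v : V}

theorem chain_darc_ne {a : V} {l : List V} (h : List.Chain (DArc G v) a l) :
    ∀ x ∈ l, x ≠ v := by
  induction l generalizing a with
  | nil => simp
  | cons b t ih =>
      obtain ⟨h1, h2⟩ := List.isChain_cons_cons.1 h
      intro x hx
      rcases List.mem_cons.1 hx with rfl | hx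
      · exact h1.2.1
      · exact ih h2 x hx

theorem darc_transGen_irrefl
    (hv : ∀ u steps, G.IsCycle u steps → v ∈ u :: steps.map Prod.fst)
    (a : V) : ¬ Relation.TransGen (DArc G v) a a := by
  intro h
  obtain ⟨l, hne, hch, hlast⟩ := transGen_exists_chain h
  have hane : a ≠ v := by
    cases l with
    | nil => exact absurd rfl hne
    | cons b t =>
        obtain ⟨h1, -⟩ := List.isChain_cons_cons.1 hch
        exact h1.1
  exact vfree_closed_false hv l.length a l le_rfl hane (chain_darc_ne hch) hne
    (List.IsChain.imp (fun _ _ hd => hd.2.2) hch) hlast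

theorem darc_wf [Finite V]
    (hv : ∀ u steps, G.IsCycle u steps → v ∈ u :: steps.map Prod.fst) :
    WellFounded (Relation.TransGen (DArc G v)) := by
  haveI : IsTrans V (Relation.TransGen (DArc G v)) := ⟨fun _ _ _ => Relation.TransGen.trans⟩
  haveI : IsIrrefl V (Relation.TransGen (DArc G v)) := ⟨darc_transGen_irrefl hv⟩
  exact Finite.wellFounded_of_trans_of_irrefl _

/-- no closed v-free walk -/
theorem vfree_closed_walk_false
    (hv : ∀ u steps, G.IsCycle u steps → v ∈ u :: steps.map Prod.fst)
    {u : V} {steps : List (V × Bool)} (hu : u ≠ v) (hne : steps ≠ [])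
    (hw : G.IsWalk u steps) (hend : walkEnd u steps = u)
    (hall : ∀ y ∈ steps.map Prod.fst, y ≠ v) : False := by
  exact vfree_closed_false hv (steps.map Prod.fst).length u (steps.map Prod.fst) le_rfl hu hall
    (by simpa using hne) (SignedDigraph.isWalk_chain hw) hend

theorem walk_last_arc {u : V} {steps : List (V × Bool)} (hne : steps ≠ [])
    (hw : G.IsWalk u steps) : ∃ j, G.Arc j (walkEnd u steps) := by
  induction steps generalizing u with
  | nil => exact absurd rfl hne
  | cons st rest ih =>
      cases rest with
      | nil => exact ⟨u, by rw [walkEnd_cons]; exact hw.arc⟩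
      | cons st2 rest2 =>
          rw [walkEnd_cons]
          exact ih (by simp) hw.2

theorem no_source (hstrong : G.StronglyConnected) [Fintype V]
    (hcard : 1 < Fintype.card V) (i : V) : ∃ j, G.Arc j i := by
  obtain ⟨u, hu⟩ := Fintype.exists_ne_of_one_lt_card hcard i
  obtain ⟨steps, hw, hend⟩ := hstrong u i
  have hne : steps ≠ [] := by
    intro h; rw [h] at hend; exact absurd hend hu
  obtain ⟨j, hj⟩ := walk_last_arc hne hw
  exact ⟨j, hend ▸ hj⟩

/-- extract a v-free (after the start) walk from `v` to `x ≠ v` -/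
theorem exists_vfree_walk (x : V) (hx : x ≠ v) :
    ∀ (m : ℕ) (steps : List (V × Bool)), steps.length ≤ m → G.IsWalk v steps →
    walkEnd v steps = x →
    ∃ steps', G.IsWalk v steps' ∧ walkEnd v steps' = x ∧
      ∀ y ∈ steps'.map Prod.fst, y ≠ v := by
  intro m
  induction m with
  | zero =>
      intro steps hlen hw hend
      have : steps = [] := List.length_eq_zero_iff.1 (Nat.le_zero.1 hlen)
      subst this
      rw [walkEnd_nil] at hend
      exact absurd hend.symm hx
  | succ m ih =>
      intro steps hlen hw hend
      by_cases hfree : ∀ y ∈ steps.map Prod.fst, y ≠ v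
      · exact ⟨steps, hw, hend, hfree⟩
      · push_neg at hfree
        obtain ⟨y, hy, hyv⟩ := hfree
        obtain ⟨st, hst, hst1⟩ := List.mem_map.1 hy
        rw [hyv] at hst1
        obtain ⟨s1, s2, rfl⟩ := List.append_of_mem hst
        have hw2 : G.IsWalk (walkEnd v s1) (st :: s2) := (SignedDigraph.isWalk_append.1 hw).2
        have hw3 : G.IsWalk v s2 := hst1 ▸ hw2.tail
        refine ih s2 ?_ hw3 ?_
        · have := hlen
          simp [List.length_append] at this ⊢
          omega
        · rw [walkEnd_append, walkEnd_cons, hst1] at hend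
          exact hend

/-- truncate a walk to `v` at the first visit of `v` -/
theorem exists_walk_vlast {u : V} (hu : u ≠ v) :
    ∀ (m : ℕ) (steps : List (V × Bool)), steps.length ≤ m → G.IsWalk u steps →
    walkEnd u steps = v →
    ∃ steps', G.IsWalk u steps' ∧ walkEnd u steps' = v ∧ steps' ≠ [] ∧
      ∀ y ∈ (steps'.map Prod.fst).dropLast, y ≠ v := by
  intro m
  induction m with
  | zero =>
      intro steps hlen hw hend
      have : steps = [] := List.length_eq_zero_iff.1 (Nat.le_zero.1 hlen)
      subst this
      rw [walkEnd_nil] at hend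
      exact absurd hend hu
  | succ m ih =>
      intro steps hlen hw hend
      by_cases hfree : ∀ y ∈ (steps.map Prod.fst).dropLast, y ≠ v
      · have hne : steps ≠ [] := by
          intro h; subst h; exact absurd hend hu
        exact ⟨steps, hw, hend, hne, hfree⟩
      · push_neg at hfree
        obtain ⟨y, hy, hyv⟩ := hfree
        rw [← List.map_dropLast] at hy
        obtain ⟨st, hst, hst1⟩ := List.mem_map.1 hy
        rw [hyv] at hst1
        obtain ⟨d1, d2, hdl⟩ := List.append_of_mem hst
        have hsteps : steps = d1 ++ st :: (d2 ++ [steps.getLastD (v, true)]) := by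
          conv_lhs => rw [← dropLast_append_getLastD (l := steps)
            (by intro h; subst h; simp at hst) (v, true), hdl]
          simp
        rw [hsteps] at hw
        have hw1 : G.IsWalk u d1 := (SignedDigraph.isWalk_append.1 hw).1
        have hw2 : G.IsWalk (walkEnd u d1) (st :: (d2 ++ [steps.getLastD (v, true)])) :=
          (SignedDigraph.isWalk_append.1 hw).2
        have hw3 : G.IsWalk u (d1 ++ [st]) := by
          rw [SignedDigraph.isWalk_append]
          exact ⟨hw1, hw2.1, trivial⟩
        refine ih (d1 ++ [st]) ?_ hw3 ?_
        · have hlen2 : steps.length = d1.length + d2.length + 2 := by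
            rw [hsteps]; simp; omega
          simp
          omega
        · rw [walkEnd_append, walkEnd_singleton, hst1]
  
end GraphLayer2

section SignLayer

variable {V : Type*} {G : SignedDigraph V} {v : V}

theorem walkEnd_mem {u : V} {steps : List (V × Bool)} (h : steps ≠ []) :
    walkEnd u steps ∈ steps.map Prod.fst := by
  induction steps generalizing u with
  | nil => exact absurd rfl h
  | cons st rest ih =>
      rw [walkEnd_cons]
      cases rest with
      | nil => simp [walkEnd_nil]
      | cons st2 rest2 =>
          have := ih (u := st.1) (by simp)
          exact List.mem_cons_of_mem _ this

/-- every closed walk at `v` with `v`-free interior is negative -/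
theorem masterNeg
    (hv : ∀ u steps, G.IsCycle u steps → v ∈ u :: steps.map Prod.fst)
    (hpos : G.NoPositiveCycle)
    {steps : List (V × Bool)} (hne : steps ≠ []) (hw : G.IsWalk v steps)
    (hend : walkEnd v steps = v)
    (hint : ∀ y ∈ (steps.map Prod.fst).dropLast, y ≠ v) :
    walkSign steps = false := by
  by_cases hnd : (v :: (steps.map Prod.fst).dropLast).Nodup
  · exact hpos v steps ⟨hne, hw, hend, hnd⟩
  · exfalso
    have hnd2 : ¬ ((steps.map Prod.fst).dropLast).Nodup := by
      intro h
      exact hnd (List.nodup_cons.2 ⟨fun hmem => hint v hmem rfl, h⟩)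
    obtain ⟨a, m1, m2, m3, hdl⟩ := exists_dup_split hnd2
    have hMne : steps.map Prod.fst ≠ [] := by simpa using hne
    have hMlast : (steps.map Prod.fst).getLastD v = v := hend
    have hM : steps.map Prod.fst = m1 ++ a :: (m2 ++ a :: (m3 ++ [v])) := by
      conv_lhs => rw [← dropLast_append_getLastD hMne v, hMlast, hdl]
      simp
    have hch : List.Chain G.Arc v (steps.map Prod.fst) := SignedDigraph.isWalk_chain hw
    rw [hM] at hch
    have hch2 := (List.isChain_cons_split.1 hch).2
    have hch3 := ((List.isChain_cons_split (l₁ := m2) (c := a) (l₂ := m3 ++ [v])).1 hch2).1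
    have hane : a ≠ v := hint a (by rw [hdl]; simp)
    refine vfree_closed_false hv (m2 ++ [a]).length a (m2 ++ [a]) le_rfl hane ?_ (by simp)
      hch3 (by simp [List.getLastD_concat])
    intro y hy
    rcases List.mem_append.1 hy with h | h
    · exact hint y (by rw [hdl]; simp [h])
    · simp at h; subst h; exact hane

/-- all v-free walks from `v` to `x` have the same sign -/
theorem same_sign
    (hv : ∀ u steps, G.IsCycle u steps → v ∈ u :: steps.map Prod.fst)
    (hpos : G.NoPositiveCycle) (hstrong : G.StronglyConnected)
    {x : V} (hx : x ≠ v) {P Q : List (V × Bool)}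
    (hPw : G.IsWalk v P) (hPe : walkEnd v P = x) (hPf : ∀ y ∈ P.map Prod.fst, y ≠ v)
    (hQw : G.IsWalk v Q) (hQe : walkEnd v Q = x) (hQf : ∀ y ∈ Q.map Prod.fst, y ≠ v) :
    walkSign P = walkSign Q := by
  obtain ⟨R0, hR0w, hR0e⟩ := hstrong x v
  obtain ⟨R, hRw, hRe, hRne, hRf⟩ := exists_walk_vlast hx R0.length R0 le_rfl hR0w hR0e
  have key : ∀ S : List (V × Bool), G.IsWalk v S → walkEnd v S = x →
      (∀ y ∈ S.map Prod.fst, y ≠ v) → walkSign (S ++ R) = false := by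
    intro S hSw hSe hSf
    refine masterNeg hv hpos (by simp [hRne]) ?_ ?_ ?_
    · rw [SignedDigraph.isWalk_append]
      exact ⟨hSw, hSe ▸ hRw⟩
    · rw [walkEnd_append, hSe]
      exact hRe
    · intro y hy
      rw [List.map_append, List.dropLast_append_of_ne_nil (l := R.map Prod.fst) (by simpa using hRne)] at hy
      rcases List.mem_append.1 hy with h | h
      · exact hSf y h
      · exact hRf y h
  have h1 := key P hPw hPe hPf
  have h2 := key Q hQw hQe hQf
  rw [walkSign_append] at h1 h2
  have := h1.trans h2.symm
  cases hsp : walkSign P <;> cases hsq : walkSign Q <;>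
    rw [hsp, hsq] at this <;> simp_all

/-- existence of a consistent sign function -/
theorem exists_sigma [Fintype V]
    (hv : ∀ u steps, G.IsCycle u steps → v ∈ u :: steps.map Prod.fst)
    (hpos : G.NoPositiveCycle) (hstrong : G.StronglyConnected) :
    ∃ σ : V → Bool, σ v = true ∧
      (∀ j i s, (if s then G.pos j i else G.neg j i) → i ≠ v → σ i = (σ j == s)) ∧
      (∀ j s, (if s then G.pos j v else G.neg j v) → (σ j == s) = false) := by
  have hP : ∀ x : V, ∃ steps, G.IsWalk v steps ∧ walkEnd v steps = x ∧
      ∀ y ∈ steps.map Prod.fst, y ≠ v := by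
    intro x
    by_cases hx : x = v
    · exact ⟨[], trivial, hx ▸ walkEnd_nil v, by simp⟩
    · obtain ⟨steps, hw, hend⟩ := hstrong v x
      exact exists_vfree_walk x hx steps.length steps le_rfl hw hend
  choose P hPw hPe hPf using hP
  have hPv : P v = [] := by
    have h1 := hPe v
    by_contra hne
    have hmem : walkEnd v (P v) ∈ (P v).map Prod.fst := walkEnd_mem hne
    rw [h1] at hmem
    exact hPf v v hmem rfl
  refine ⟨fun x => walkSign (P x), by show walkSign (P v) = true; rw [hPv]; rfl, ?_, ?_⟩
  · intro j i s harc hi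
    show walkSign (P i) = (walkSign (P j) == s)
    have hWw : G.IsWalk v (P j ++ [(i, s)]) := by
      rw [SignedDigraph.isWalk_append, hPe]
      exact ⟨hPw j, harc, trivial⟩
    have hWe : walkEnd v (P j ++ [(i, s)]) = i := by
      rw [walkEnd_append, walkEnd_singleton]
    have hWf : ∀ y ∈ (P j ++ [(i, s)]).map Prod.fst, y ≠ v := by
      intro y hy
      rw [List.map_append] at hy
      rcases List.mem_append.1 hy with h | h
      · exact hPf j y h
      · simp at h; subst h; exact hi
    have := same_sign hv hpos hstrong hi (hPw i) (hPe i) (hPf i) hWw hWe hWf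
    rw [this, walkSign_append, walkSign_singleton]
  · intro j s harc
    show (walkSign (P j) == s) = false
    have hWw : G.IsWalk v (P j ++ [(v, s)]) := by
      rw [SignedDigraph.isWalk_append, hPe]
      exact ⟨hPw j, harc, trivial⟩
    have hint : ∀ y ∈ ((P j ++ [(v, s)]).map Prod.fst).dropLast, y ≠ v := by
      intro y hy
      simp only [List.map_append, List.map_cons, List.map_nil, List.dropLast_concat] at hy
      exact hPf j y hy
    have hres := masterNeg hv hpos (steps := P j ++ [(v, s)]) (by simp) hWw
      (by rw [walkEnd_append, walkEnd_singleton]) hint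
    rw [walkSign_append, walkSign_singleton] at hres
    exact hres

end SignLayer

section Dynamics

variable {V : Type*} [DecidableEq V] {G : SignedDigraph V} {v : V} {σ : V → Bool}

set_option linter.unusedSectionVars false

theorem beq_true' (a : Bool) : (a == true) = a := by cases a <;> rfl
theorem beq_false' (a : Bool) : (a == false) = !a := by cases a <;> rfl
theorem bool_aux1 (b a : Bool) : (b == !a) = !(b == a) := by cases b <;> cases a <;> rfl

theorem wordUpdate_nil (f : (V → Bool) → V → Bool) (x : V → Bool) :
    wordUpdate f [] x = x := rfl

theorem wordUpdate_cons (f : (V → Bool) → V → Bool) (i : V) (w : List V) (x : V → Bool) :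
    wordUpdate f (i :: w) x = wordUpdate f w (localUpdate f i x) := rfl

theorem wordUpdate_append (f : (V → Bool) → V → Bool) (w1 w2 : List V) (x : V → Bool) :
    wordUpdate f (w1 ++ w2) x = wordUpdate f w2 (wordUpdate f w1 x) := by
  simp [wordUpdate, List.foldl_append]

theorem localUpdate_apply (f : (V → Bool) → V → Bool) (i j : V) (x : V → Bool) :
    localUpdate f i x j = if j = i then f x i else x j := by
  simp [localUpdate, Function.update_apply]

/-- the value of an and-or net component depends only on in-neighbours -/
theorem e_dep {f : (V → Bool) → V → Bool}
    (hf : ∀ i, IsConjunction G f i ∨ IsDisjunction G f i) (i : V) (x y : V → Bool)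
    (h : ∀ j, G.Arc j i → x j = y j) : f x i = f y i := by
  have hpos : ∀ j, G.pos j i → x j = y j := fun j hj => h j (Or.inl hj)
  have hneg : ∀ j, G.neg j i → x j = y j := fun j hj => h j (Or.inr hj)
  rcases hf i with hc | hd
  · cases hfy : f y i
    · cases hfx : f x i
      · rfl
      · exfalso
        obtain ⟨h1, h2⟩ := (hc x).1 hfx
        have : f y i = true := (hc y).2
          ⟨fun j hj => (hpos j hj).symm.trans (h1 j hj),
           fun j hj => (hneg j hj).symm.trans (h2 j hj)⟩
        rw [hfy] at this; simp at this
    · obtain ⟨h1, h2⟩ := (hc y).1 hfy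
      exact (hc x).2 ⟨fun j hj => (hpos j hj).trans (h1 j hj),
        fun j hj => (hneg j hj).trans (h2 j hj)⟩
  · cases hfy : f y i
    · obtain ⟨h1, h2⟩ := (hd y).1 hfy
      exact (hd x).2 ⟨fun j hj => (hpos j hj).trans (h1 j hj),
        fun j hj => (hneg j hj).trans (h2 j hj)⟩
    · cases hfx : f x i
      · exfalso
        obtain ⟨h1, h2⟩ := (hd x).1 hfx
        have : f y i = false := (hd y).2
          ⟨fun j hj => (hpos j hj).symm.trans (h1 j hj),
           fun j hj => (hneg j hj).symm.trans (h2 j hj)⟩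
        rw [hfy] at this; simp at this
      · rfl

theorem update_aligned
    (hS2 : ∀ j i s, (if s then G.pos j i else G.neg j i) → i ≠ v → σ i = (σ j == s))
    {f : (V → Bool) → V → Bool}
    (hf : ∀ i, IsConjunction G f i ∨ IsDisjunction G f i)
    {i : V} (hiv : i ≠ v) (hin : ∃ j, G.Arc j i) {x : V → Bool} {b : Bool}
    (h : ∀ j, G.Arc j i → x j = (b == σ j)) : f x i = (b == σ i) := by
  have hxp : ∀ j, G.pos j i → x j = (b == σ i) := by
    intro j hj
    rw [h j (Or.inl hj), hS2 j i true (by simpa) hiv, beq_true']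
  have hxn : ∀ j, G.neg j i → x j = !(b == σ i) := by
    intro j hj
    rw [h j (Or.inr hj), hS2 j i false (by simpa) hiv, beq_false', bool_aux1, Bool.not_not]
  rcases hf i with hc | hd
  · by_cases hbi : (b == σ i) = true
    · rw [hbi]
      exact (hc x).2 ⟨fun j hj => by rw [hxp j hj, hbi],
        fun j hj => by rw [hxn j hj, hbi]; rfl⟩
    · have hbi' : (b == σ i) = false := by revert hbi; cases (b == σ i) <;> simp
      rw [hbi']
      cases hfx : f x i
      · rfl
      · exfalso
        obtain ⟨h1, h2⟩ := (hc x).1 hfx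
        obtain ⟨j0, hj0⟩ := hin
        rcases hj0 with hp | hn
        · have := (hxp j0 hp).symm.trans (h1 j0 hp)
          rw [hbi'] at this; simp at this
        · have := (hxn j0 hn).symm.trans (h2 j0 hn)
          rw [hbi'] at this; simp at this
  · by_cases hbi : (b == σ i) = true
    · rw [hbi]
      cases hfx : f x i
      · exfalso
        obtain ⟨h1, h2⟩ := (hd x).1 hfx
        obtain ⟨j0, hj0⟩ := hin
        rcases hj0 with hp | hn
        · have := (hxp j0 hp).symm.trans (h1 j0 hp)
          rw [hbi] at this; simp at this
        · have := (hxn j0 hn).symm.trans (h2 j0 hn)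
          rw [hbi] at this; simp at this
      · rfl
    · have hbi' : (b == σ i) = false := by revert hbi; cases (b == σ i) <;> simp
      rw [hbi']
      exact (hd x).2 ⟨fun j hj => by rw [hxp j hj, hbi'],
        fun j hj => by rw [hxn j hj, hbi']; rfl⟩

theorem update_v
    (hS3 : ∀ j s, (if s then G.pos j v else G.neg j v) → (σ j == s) = false)
    {f : (V → Bool) → V → Bool}
    (hf : ∀ i, IsConjunction G f i ∨ IsDisjunction G f i)
    (hin : ∃ j, G.Arc j v) {x : V → Bool} {b : Bool}
    (h : ∀ j, G.Arc j v → x j = (b == σ j)) : f x v = !b := by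
  have hxp : ∀ j, G.pos j v → x j = !b := by
    intro j hj
    have hs := hS3 j true (by simpa)
    rw [beq_true'] at hs
    rw [h j (Or.inl hj), hs, beq_false']
  have hxn : ∀ j, G.neg j v → x j = b := by
    intro j hj
    have hs := hS3 j false (by simpa)
    rw [beq_false'] at hs
    have hs' : σ j = true := by simpa using hs
    rw [h j (Or.inr hj), hs', beq_true']
  rcases hf v with hc | hd
  · cases b
    · exact (hc x).2 ⟨fun j hj => hxp j hj, fun j hj => hxn j hj⟩
    · cases hfx : f x v
      · rfl
      · exfalso
        obtain ⟨h1, h2⟩ := (hc x).1 hfx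
        obtain ⟨j0, hj0⟩ := hin
        rcases hj0 with hp | hn
        · have := (hxp j0 hp).symm.trans (h1 j0 hp); simp at this
        · have := (hxn j0 hn).symm.trans (h2 j0 hn); simp at this
  · cases b
    · cases hfx : f x v
      · exfalso
        obtain ⟨h1, h2⟩ := (hd x).1 hfx
        obtain ⟨j0, hj0⟩ := hin
        rcases hj0 with hp | hn
        · have := (hxp j0 hp).symm.trans (h1 j0 hp); simp at this
        · have := (hxn j0 hn).symm.trans (h2 j0 hn); simp at this
      · rfl
    · exact (hd x).2 ⟨fun j hj => hxp j hj, fun j hj => hxn j hj⟩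

theorem update_disagree
    (hS2 : ∀ j i s, (if s then G.pos j i else G.neg j i) → i ≠ v → σ i = (σ j == s))
    (hS3 : ∀ j s, (if s then G.pos j v else G.neg j v) → (σ j == s) = false)
    {f : (V → Bool) → V → Bool}
    (hf : ∀ i, IsConjunction G f i ∨ IsDisjunction G f i)
    {c k1 k2 : V} (h1 : G.Arc k1 c) (h2 : G.Arc k2 c) :
    ∃ γ : Bool, ∀ (b : Bool) (x : V → Bool), x k1 = ((!b) == σ k1) → x k2 = (b == σ k2) →
      f x c = γ := by
  rcases hf c with hc | hd
  · refine ⟨false, fun b x ha1 ha2 => ?_⟩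
    cases hfx : f x c
    · rfl
    · exfalso
      obtain ⟨hp, hn⟩ := (hc x).1 hfx
      have key : ∀ k t, G.Arc k c → x k = (t == σ k) →
          (c = v → t = false) ∧ (c ≠ v → (t == σ c) = true) := by
        intro k t hk ht
        rcases hk with hkp | hkn
        · have hxk : x k = true := hp k hkp
          have hts : (t == σ k) = true := ht ▸ hxk
          constructor
          · intro hcv
            subst hcv
            have hs := hS3 k true (by simpa using hkp)
            rw [beq_true'] at hs
            rw [hs] at hts
            cases t <;> simp_all
          · intro hcv
            rw [hS2 k c true (by simpa using hkp) hcv, beq_true']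
            exact hts
        · have hxk : x k = false := hn k hkn
          have hts : (t == σ k) = false := ht ▸ hxk
          constructor
          · intro hcv
            subst hcv
            have hs := hS3 k false (by simpa using hkn)
            rw [beq_false'] at hs
            have hs' : σ k = true := by simpa using hs
            rw [hs'] at hts
            cases t <;> simp_all
          · intro hcv
            rw [hS2 k c false (by simpa using hkn) hcv, beq_false', bool_aux1, hts]
            rfl
      obtain ⟨hk1v, hk1nv⟩ := key k1 (!b) h1 ha1
      obtain ⟨hk2v, hk2nv⟩ := key k2 b h2 ha2
      by_cases hcv : c = v
      · have e1 := hk1v hcv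
        have e2 := hk2v hcv
        cases b <;> revert e1 e2 <;> decide
      · have e1 := hk1nv hcv
        have e2 := hk2nv hcv
        cases b <;> cases hσc : σ c <;> rw [hσc] at e1 e2 <;> revert e1 e2 <;> decide
  · refine ⟨true, fun b x ha1 ha2 => ?_⟩
    cases hfx : f x c
    · exfalso
      obtain ⟨hp, hn⟩ := (hd x).1 hfx
      have key : ∀ k t, G.Arc k c → x k = (t == σ k) →
          (c = v → t = true) ∧ (c ≠ v → (t == σ c) = false) := by
        intro k t hk ht
        rcases hk with hkp | hkn
        · have hxk : x k = false := hp k hkp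
          have hts : (t == σ k) = false := ht ▸ hxk
          constructor
          · intro hcv
            subst hcv
            have hs := hS3 k true (by simpa using hkp)
            rw [beq_true'] at hs
            rw [hs] at hts
            cases t <;> simp_all
          · intro hcv
            rw [hS2 k c true (by simpa using hkp) hcv, beq_true']
            exact hts
        · have hxk : x k = true := hn k hkn
          have hts : (t == σ k) = true := ht ▸ hxk
          constructor
          · intro hcv
            subst hcv
            have hs := hS3 k false (by simpa using hkn)
            rw [beq_false'] at hs
            have hs' : σ k = true := by simpa using hs
            rw [hs'] at hts
            cases t <;> simp_all
          · intro hcv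
            rw [hS2 k c false (by simpa using hkn) hcv, beq_false', bool_aux1, hts]
            rfl
      obtain ⟨hk1v, hk1nv⟩ := key k1 (!b) h1 ha1
      obtain ⟨hk2v, hk2nv⟩ := key k2 b h2 ha2
      by_cases hcv : c = v
      · have e1 := hk1v hcv
        have e2 := hk2v hcv
        cases b <;> revert e1 e2 <;> decide
      · have e1 := hk1nv hcv
        have e2 := hk2nv hcv
        cases b <;> cases hσc : σ c <;> rw [hσc] at e1 e2 <;> revert e1 e2 <;> decide
    · rfl

end Dynamics

section Sweep

variable {V : Type*} [Fintype V] [DecidableEq V] {G : SignedDigraph V} {v : V} {σ : V → Bool}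

set_option linter.unusedSectionVars false

theorem sweep
    (hv : ∀ u steps, G.IsCycle u steps → v ∈ u :: steps.map Prod.fst)
    (hstrong : G.StronglyConnected) (hcard : 1 < Fintype.card V)
    (hS2 : ∀ j i s, (if s then G.pos j i else G.neg j i) → i ≠ v → σ i = (σ j == s)) :
    ∀ (k : ℕ) (T : Finset V), T.card = k → v ∉ T →
    ∃ L : List V, L.Nodup ∧ (∀ i, i ∈ L ↔ i ∈ T) ∧ L.length = T.card ∧
      ∀ (f : (V → Bool) → V → Bool), (∀ i, IsConjunction G f i ∨ IsDisjunction G f i) →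
      ∀ (x : V → Bool) (b : Bool),
        (∀ j, j ∉ T → (∃ i ∈ T, G.Arc j i) → x j = (b == σ j)) →
        wordUpdate f L x = fun j => if j ∈ T then (b == σ j) else x j := by
  intro k
  induction k with
  | zero =>
      intro T hTcard hvT
      have hT : T = ∅ := Finset.card_eq_zero.1 hTcard
      subst hT
      refine ⟨[], by simp, by simp, by simp, ?_⟩
      intro f hf x b hpre
      funext j
      simp [wordUpdate_nil]
  | succ k ih =>
      intro T hTcard hvT
      have hTne : T.Nonempty := Finset.card_pos.1 (by omega)
      obtain ⟨m, hmT0, hmin⟩ := (darc_wf hv).has_min (↑T : Set V) (by simpa using hTne)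
      have hmT : m ∈ T := Finset.mem_coe.1 hmT0
      have hmv : m ≠ v := fun h => hvT (h ▸ hmT)
      have hnoT : ∀ j ∈ T, ¬ G.Arc j m := by
        intro j hjT harc
        exact hmin j (Finset.mem_coe.2 hjT)
          (Relation.TransGen.single ⟨fun h => hvT (h ▸ hjT), hmv, harc⟩)
      obtain ⟨L', hnd', hmem', hlen', hdyn'⟩ := ih (T.erase m)
        (by rw [Finset.card_erase_of_mem hmT]; omega) (fun h => hvT (Finset.mem_of_mem_erase h))
      refine ⟨m :: L', ?_, ?_, ?_, ?_⟩
      · refine List.nodup_cons.2 ⟨fun h => ?_, hnd'⟩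
        exact (Finset.notMem_erase m T) ((hmem' m).1 h)
      · intro i
        rw [List.mem_cons, hmem' i, Finset.mem_erase]
        constructor
        · rintro (rfl | ⟨-, h⟩)
          · exact hmT
          · exact h
        · intro hiT
          by_cases him : i = m
          · exact Or.inl him
          · exact Or.inr ⟨him, hiT⟩
      · simp only [List.length_cons, hlen', Finset.card_erase_of_mem hmT]
        omega
      · intro f hf x b hpre
        rw [wordUpdate_cons]
        set x' := localUpdate f m x with hx'
        have hfm : f x m = (b == σ m) := by
          refine update_aligned hS2 hf hmv (no_source hstrong hcard m) ?_
          intro j hj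
          by_cases hjT : j ∈ T
          · exact absurd hj (hnoT j hjT)
          · exact hpre j hjT ⟨m, hmT, hj⟩
        have hx'm : x' m = (b == σ m) := by
          rw [hx', localUpdate_apply, if_pos rfl, hfm]
        have hx'o : ∀ j, j ≠ m → x' j = x j := by
          intro j hj
          rw [hx', localUpdate_apply, if_neg hj]
        have hpre' : ∀ j, j ∉ T.erase m → (∃ i ∈ T.erase m, G.Arc j i) →
            x' j = (b == σ j) := by
          intro j hj ⟨i, hiT, harc⟩
          by_cases hjm : j = m
          · subst hjm; exact hx'm
          · rw [hx'o j hjm]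
            refine hpre j ?_ ⟨i, Finset.mem_of_mem_erase hiT, harc⟩
            intro hjT
            exact hj (Finset.mem_erase.2 ⟨hjm, hjT⟩)
        rw [hdyn' f hf x' b hpre']
        funext j
        show (if j ∈ T.erase m then (b == σ j) else x' j) = if j ∈ T then (b == σ j) else x j
        by_cases hje : j ∈ T.erase m
        · rw [if_pos hje, if_pos (Finset.mem_of_mem_erase hje)]
        · rw [if_neg hje]
          by_cases hjm : j = m
          · subst hjm
            rw [if_pos hmT]
            exact hx'm
          · have : j ∉ T := fun h => hje (Finset.mem_erase.2 ⟨hjm, h⟩)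
            rw [if_neg this, hx'o j hjm]

theorem chain_agree {f : (V → Bool) → V → Bool}
    (hf : ∀ i, IsConjunction G f i ∨ IsDisjunction G f i) :
    ∀ (l : List V) (a : V) (y0 y1 : V → Bool),
      List.Chain (fun p q => G.Arc p q ∧ ∀ j, G.Arc j q → j = p) a l →
      y0 a = y1 a →
      (wordUpdate f l y0) (l.getLastD a) = (wordUpdate f l y1) (l.getLastD a) := by
  intro l
  induction l with
  | nil => intro a y0 y1 _ h; exact h
  | cons q t ih =>
      intro a y0 y1 hch hagree
      obtain ⟨⟨harc, huniq⟩, hch'⟩ := List.isChain_cons_cons.1 hch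
      rw [List.getLastD_cons, wordUpdate_cons, wordUpdate_cons]
      refine ih q (localUpdate f q y0) (localUpdate f q y1) hch' ?_
      rw [localUpdate_apply, localUpdate_apply, if_pos rfl, if_pos rfl]
      refine e_dep hf q y0 y1 ?_
      intro j hj
      rw [huniq j hj]
      exact hagree

end Sweep

section Structure

variable {V : Type*} [Fintype V] [DecidableEq V] {G : SignedDigraph V} {v : V}

set_option linter.unusedSectionVars false

theorem simple_of_sigma {σ : V → Bool}
    (hS2 : ∀ j i s, (if s then G.pos j i else G.neg j i) → i ≠ v → σ i = (σ j == s))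
    (hS3 : ∀ j s, (if s then G.pos j v else G.neg j v) → (σ j == s) = false) :
    ∀ j i, ¬ (G.pos j i ∧ G.neg j i) := by
  rintro j i ⟨hp, hn⟩
  by_cases hiv : i = v
  · subst hiv
    have h1 := hS3 j true (by simpa)
    have h2 := hS3 j false (by simpa)
    cases hσ : σ j <;> rw [hσ] at h1 h2 <;> simp_all
  · have h1 := hS2 j i true (by simpa) hiv
    have h2 := hS2 j i false (by simpa) hiv
    rw [h1] at h2
    cases hσ : σ j <;> rw [hσ] at h2 <;> simp_all

theorem mem_of_closed {C : V → Prop} (hclosed : ∀ k x, C x → G.Arc k x → C k) :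
    ∀ (steps : List (V × Bool)) (u : V), G.IsWalk u steps → C (walkEnd u steps) → C u := by
  intro steps
  induction steps with
  | nil => intro u _ h; exact h
  | cons st rest ih =>
      intro u hw hC
      rw [walkEnd_cons] at hC
      exact hclosed u st.1 (ih st.1 hw.2 hC) hw.arc

theorem getLastD_mem : ∀ {l : List V}, l ≠ [] → ∀ (d : V), l.getLastD d ∈ l := by
  intro l
  induction l with
  | nil => intro h; exact absurd rfl h
  | cons a t ih =>
      intro _ d
      rw [List.getLastD_cons]
      cases ht : t with
      | nil => simp
      | cons b t' =>
          rw [← ht]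
          exact List.mem_cons_of_mem _ (ih (by rw [ht]; simp) a)

theorem not_mem_dropLast_of_nodup {l : List V} (hnd : l.Nodup) (hne : l ≠ []) (d : V) :
    l.getLastD d ∉ l.dropLast := by
  conv at hnd => rw [← dropLast_append_getLastD hne d]
  rw [List.nodup_append] at hnd
  intro hmem
  exact hnd.2.2 _ hmem _ (by simp) rfl

theorem chain_pred {a : V} {rest : List V}
    (hch : List.Chain (fun p q => G.Arc p q ∧ ∀ k, G.Arc k q → k = p) a rest) :
    ∀ x ∈ rest, ∃ p, p ∈ a :: rest ∧ G.Arc p x ∧ ∀ k, G.Arc k x → k = p := by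
  induction rest generalizing a with
  | nil => simp
  | cons b t ih =>
      obtain ⟨⟨harc, huniq⟩, hch'⟩ := List.isChain_cons_cons.1 hch
      intro x hx
      rcases List.mem_cons.1 hx with rfl | hx
      · exact ⟨a, by simp, harc, huniq⟩
      · obtain ⟨p, hp1, hp2, hp3⟩ := ih hch' x hx
        refine ⟨p, ?_, hp2, hp3⟩
        rcases List.mem_cons.1 hp1 with rfl | h
        · simp
        · simp [h]

theorem isWalk_induce_univ {u : V} {steps : List (V × Bool)} (h : G.IsWalk u steps) :
    (G.induce Set.univ).IsWalk u steps := by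
  induction steps generalizing u with
  | nil => trivial
  | cons st rest ih =>
      refine ⟨?_, ih h.2⟩
      have h1 := h.1
      by_cases hs : st.2 = true
      · rw [hs] at h1 ⊢
        rw [if_pos rfl] at h1 ⊢
        exact ⟨trivial, trivial, h1⟩
      · have hs' : st.2 = false := by simpa using hs
        rw [hs'] at h1 ⊢
        rw [if_neg (by simp)] at h1 ⊢
        exact ⟨trivial, trivial, h1⟩

/-- if every vertex has a unique in-neighbour and the in-closure works out,
`G` is a cycle graph -/
theorem cyclegraph_of_unique_in
    (hstrong : G.StronglyConnected)
    (hsimple : ∀ j i, ¬ (G.pos j i ∧ G.neg j i))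
    (hin : ∀ i : V, ∃ p, G.Arc p i ∧ ∀ k, G.Arc k i → k = p)
    (hne : Nonempty V) : G.IsCycleGraph := by
  refine ⟨Set.univ_nonempty, ?_, ?_⟩
  · intro i _
    obtain ⟨p, hp, huniq⟩ := hin i
    have hposset : {j | (G.induce Set.univ).pos j i} = {j | G.pos j i} := by
      ext k; simp [SignedDigraph.induce]
    have hnegset : {j | (G.induce Set.univ).neg j i} = {j | G.neg j i} := by
      ext k; simp [SignedDigraph.induce]
    rw [SignedDigraph.inDegree, hposset, hnegset]
    rcases hp with hpp | hpn
    · have h1 : {j | G.pos j i} = {p} := by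
        ext k
        simp only [Set.mem_setOf_eq, Set.mem_singleton_iff]
        exact ⟨fun h => huniq k (Or.inl h), fun h => h ▸ hpp⟩
      have h2 : {j | G.neg j i} = ∅ := by
        ext k
        simp only [Set.mem_setOf_eq, Set.mem_empty_iff_false, iff_false]
        intro h
        have := huniq k (Or.inr h)
        subst this
        exact hsimple k i ⟨hpp, h⟩
      rw [h1, h2, Set.ncard_singleton, Set.ncard_empty]
    · have h1 : {j | G.pos j i} = ∅ := by
        ext k
        simp only [Set.mem_setOf_eq, Set.mem_empty_iff_false, iff_false]
        intro h
        have := huniq k (Or.inl h)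
        subst this
        exact hsimple k i ⟨h, hpn⟩
      have h2 : {j | G.neg j i} = {p} := by
        ext k
        simp only [Set.mem_setOf_eq, Set.mem_singleton_iff]
        exact ⟨fun h => huniq k (Or.inr h), fun h => h ▸ hpn⟩
      rw [h1, h2, Set.ncard_singleton, Set.ncard_empty]
  · intro u _ w _
    obtain ⟨steps, hw, hend⟩ := hstrong u w
    exact ⟨steps, isWalk_induce_univ hw, hend⟩

theorem build_chain
    (hv : ∀ u steps, G.IsCycle u steps → v ∈ u :: steps.map Prod.fst)
    (hstrong : G.StronglyConnected)
    (hnotcycle : ¬ G.IsCycleGraph) (hcard : 1 < Fintype.card V)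
    (hsimple : ∀ j i, ¬ (G.pos j i ∧ G.neg j i)) :
    ∀ (m : ℕ) (a : V) (rest : List V), (a :: rest).Nodup → (a :: rest).getLastD v = v →
      List.Chain (fun p q => G.Arc p q ∧ ∀ k, G.Arc k q → k = p) a rest →
      Fintype.card V + 1 ≤ (a :: rest).length + m →
      ∃ (c : V) (ch : List V) (k1 k2 : V), (c :: ch).Nodup ∧ (c :: ch).getLastD v = v ∧
        List.Chain (fun p q => G.Arc p q ∧ ∀ k, G.Arc k q → k = p) c ch ∧
        k1 ≠ k2 ∧ G.Arc k1 c ∧ G.Arc k2 c := by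
  intro m
  induction m with
  | zero =>
      intro a rest hnd hlast hch hlen
      exfalso
      have hle := hnd.length_le_card
      simp only [List.length_cons, Nat.add_zero] at hlen hle
      omega
  | succ m ih =>
      intro a rest hnd hlast hch hlen
      obtain ⟨j, hj⟩ := no_source hstrong hcard a
      by_cases htwo : ∃ k, G.Arc k a ∧ k ≠ j
      · obtain ⟨k, hk, hkj⟩ := htwo
        exact ⟨a, rest, k, j, hnd, hlast, hch, hkj, hk, hj⟩
      · push_neg at htwo
        have huniq : ∀ k, G.Arc k a → k = j := fun k hk => htwo k hk
        by_cases hjmem : j ∈ a :: rest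
        · by_cases hjv : j = v
          · -- every vertex has a unique in-neighbour: cycle graph, contradiction
            exfalso
            have hj' : G.Arc v a := hjv ▸ hj
            have huniq' : ∀ k, G.Arc k a → k = v := fun k hk => (huniq k hk).trans hjv
            have hCv : v ∈ a :: rest := hjv ▸ hjmem
            have hpred : ∀ x ∈ a :: rest, ∃ p, p ∈ a :: rest ∧ G.Arc p x ∧
                ∀ k, G.Arc k x → k = p := by
              intro x hx
              rcases List.mem_cons.1 hx with rfl | hx
              · exact ⟨v, hCv, hj', huniq'⟩
              · exact chain_pred hch x hx
            have hclosed : ∀ k x, x ∈ a :: rest → G.Arc k x → k ∈ a :: rest := by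
              intro k x hx harc
              obtain ⟨p, hp1, -, hp3⟩ := hpred x hx
              exact (hp3 k harc) ▸ hp1
            have hall : ∀ u : V, u ∈ a :: rest := by
              intro u
              obtain ⟨steps, hw, hend⟩ := hstrong u v
              exact mem_of_closed (C := fun y => y ∈ a :: rest) hclosed steps u hw
                (hend ▸ hCv)
            refine hnotcycle (cyclegraph_of_unique_in hstrong hsimple ?_ ⟨v⟩)
            intro i
            obtain ⟨p, -, hp2, hp3⟩ := hpred i (hall i)
            exact ⟨p, hp2, hp3⟩
          · -- v-free closed chain: contradiction
            exfalso
            rcases List.mem_cons.1 hjmem with rfl | hjrest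
            · -- self loop on j = a
              exact vfree_closed_false hv 1 j [j] (by simp) hjv (by simpa using hjv)
                (by simp) (List.Chain.cons hj List.Chain.nil) rfl
            · -- j occurs in rest
              obtain ⟨r1, r2, hr⟩ := List.append_of_mem hjrest
              have hrestne : rest ≠ [] := by rw [hr]; simp
              have hvrest : v ∈ rest := by
                have h1 : rest.getLastD a = v := by
                  rw [← List.getLastD_cons]; exact hlast
                rw [← h1]
                exact getLastD_mem hrestne a
              have hav : a ≠ v := fun h => (List.nodup_cons.1 hnd).1 (h ▸ hvrest)
              have hdl : (a :: rest).dropLast = a :: r1 ++ (j :: r2).dropLast := by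
                rw [hr, ← List.cons_append, List.dropLast_append_of_ne_nil (l := j :: r2) (by simp)]
              have hmemdl : ∀ x ∈ a :: r1, x ≠ v := by
                intro x hx hxv
                rw [hxv] at hx
                have hnm := not_mem_dropLast_of_nodup hnd (by simp) v
                rw [hlast, hdl] at hnm
                rcases List.mem_cons.1 hx with h | h
                · exact hnm (List.mem_cons.2 (Or.inl h))
                · exact hnm (List.mem_cons.2 (Or.inr (List.mem_append_left _ h)))
              -- chain from j through a, r1, back to j
              have hchArc : List.Chain G.Arc a rest := List.IsChain.imp (fun _ _ h => h.1) hch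
              rw [hr] at hchArc
              have hchpre := (List.isChain_cons_split (l₁ := r1) (c := j) (l₂ := r2)).1 hchArc
              have hchfull : List.Chain G.Arc j (a :: (r1 ++ [j])) :=
                List.Chain.cons hj hchpre.1
              refine vfree_closed_false hv (a :: (r1 ++ [j])).length j (a :: (r1 ++ [j]))
                le_rfl hjv ?_ (by simp) hchfull ?_
              · intro y hy
                rcases List.mem_cons.1 hy with rfl | hy2
                · exact hav
                · rcases List.mem_append.1 hy2 with h | h
                  · exact hmemdl y (by simp [h])
                  · simp at h; subst h; exact hjv
              · show (a :: (r1 ++ [j])).getLastD j = j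
                rw [List.getLastD_cons, List.getLastD_concat]
        · -- extend the chain
          have hnd' : (j :: a :: rest).Nodup := List.nodup_cons.2 ⟨hjmem, hnd⟩
          have hch' : List.Chain (fun p q => G.Arc p q ∧ ∀ k, G.Arc k q → k = p)
              j (a :: rest) := List.Chain.cons ⟨hj, huniq⟩ hch
          refine ih j (a :: rest) hnd' ?_ hch' ?_
          · rw [List.getLastD_cons]; exact hlast
          · simp at hlen ⊢; omega

end Structure

section MainHelpers

variable {V : Type*} [Fintype V] [DecidableEq V] {G : SignedDigraph V} {v : V}

set_option linter.unusedSectionVars false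

theorem ra_to_v {x : V} (h : Relation.ReflTransGen (DArc G v) x v) : x = v := by
  rcases (Relation.ReflTransGen.cases_tail h) with h | ⟨m, _, hstep⟩
  · exact h.symm
  · exact absurd rfl hstep.2.1

theorem chain_transGen {x : V} {l : List V} (hch : List.Chain G.Arc x l) (hne : l ≠ [])
    (hx : x ≠ v) (hall : ∀ y ∈ l, y ≠ v) :
    Relation.TransGen (DArc G v) x (l.getLastD x) := by
  induction l generalizing x with
  | nil => exact absurd rfl hne
  | cons b t ih =>
      obtain ⟨h1, h2⟩ := List.isChain_cons_cons.1 hch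
      rw [List.getLastD_cons]
      have hbx : b ≠ v := hall b (by simp)
      cases t with
      | nil => exact Relation.TransGen.single ⟨hx, hbx, h1⟩
      | cons e t' =>
          exact Relation.TransGen.head ⟨hx, hbx, h1⟩
            (ih h2 (by simp) hbx (fun y hy => hall y (by simp [hy])))

end MainHelpers

set_option maxHeartbeats 1000000 in
/-- Proposition 3 of the paper. Let `G` be a strongly connected
signed digraph on `n` vertices, without positive cycles, whose underlying digraph is
not a cycle. If some set of at most one vertex meets every cycle of `G`, then there is
a single word `w` of length at most `3n − 1` which synchronizes every and-or-net
on `G`. -/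
theorem statement17 {V : Type} [Fintype V] [DecidableEq V]
    (G : SignedDigraph V) (n : ℕ) (hn : Fintype.card V = n)
    (hstrong : G.StronglyConnected) (hpos : G.NoPositiveCycle)
    (hnotcycle : ¬ G.IsCycleGraph)
    (hfvs : ∃ S : Finset V, S.card ≤ 1 ∧
      ∀ u steps, G.IsCycle u steps → ∃ v ∈ S, v ∈ u :: steps.map Prod.fst) :
    ∃ w : List V, w.length ≤ 3 * n - 1 ∧
      ∀ f : (V → Bool) → V → Bool, IsAndOrNet G f → SyncWord f w := by
  classical
  subst hn
  rcases Nat.lt_or_ge (Fintype.card V) 2 with hsmall | hbig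
  · -- small cases: n = 0 or n = 1
    rcases Nat.lt_or_ge (Fintype.card V) 1 with h0 | h1
    · -- empty type
      have hcard0 : Fintype.card V = 0 := by omega
      haveI : IsEmpty V := Fintype.card_eq_zero_iff.1 hcard0
      refine ⟨[], by simp [hcard0], ?_⟩
      intro f _
      exact ⟨fun j => isEmptyElim j, fun x => funext fun j => isEmptyElim j⟩
    · -- exactly one vertex
      have hcard1 : Fintype.card V = 1 := by omega
      obtain ⟨v0, hv0⟩ := Fintype.card_eq_one_iff.1 hcard1
      have hnp : ¬ G.pos v0 v0 := by
        intro hp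
        have hcyc : G.IsCycle v0 [(v0, true)] :=
          ⟨by simp, ⟨by simpa using hp, trivial⟩, rfl, by simp⟩
        have := hpos v0 _ hcyc
        rw [walkSign_singleton] at this
        simp at this
      have hnoarc : ∀ j i, ¬ G.Arc j i := by
        intro j i harc
        rw [hv0 j, hv0 i] at harc
        rcases harc with hp | hng
        · exact hnp hp
        · -- negative loop: cycle graph, contradiction
          apply hnotcycle
          refine ⟨⟨v0, trivial⟩, ?_, ?_⟩
          · intro i _
            rw [hv0 i]
            have hps : {j | (G.induce Set.univ).pos j v0} = ∅ := by
              ext k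
              simp only [SignedDigraph.induce, Set.mem_setOf_eq, Set.mem_empty_iff_false,
                iff_false, not_and]
              intro _ _ hk
              rw [hv0 k] at hk
              exact hnp hk
            have hns : {j | (G.induce Set.univ).neg j v0} = {v0} := by
              ext k
              simp only [SignedDigraph.induce, Set.mem_setOf_eq, Set.mem_singleton_iff]
              constructor
              · intro _; exact hv0 k
              · intro h; rw [h]; exact ⟨trivial, trivial, hng⟩
            rw [SignedDigraph.inDegree, hps, hns, Set.ncard_empty, Set.ncard_singleton]
          · intro u _ w _
            rw [hv0 u, hv0 w]
            exact ⟨[], trivial, rfl⟩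
      refine ⟨[v0], by simp [hcard1], ?_⟩
      rintro f ⟨hbn, hao⟩
      rcases hao v0 with hc | hd
      · refine ⟨fun _ => true, fun x => funext fun j => ?_⟩
        rw [hv0 j]
        show localUpdate f v0 x v0 = true
        rw [localUpdate_apply, if_pos rfl]
        exact (hc x).2 ⟨fun k hk => ((hnoarc k v0) (Or.inl hk)).elim,
          fun k hk => ((hnoarc k v0) (Or.inr hk)).elim⟩
      · refine ⟨fun _ => false, fun x => funext fun j => ?_⟩
        rw [hv0 j]
        show localUpdate f v0 x v0 = false
        rw [localUpdate_apply, if_pos rfl]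
        exact (hd x).2 ⟨fun k hk => ((hnoarc k v0) (Or.inl hk)).elim,
          fun k hk => ((hnoarc k v0) (Or.inr hk)).elim⟩
  · -- main case: n ≥ 2
    haveI : Nonempty V := Fintype.card_pos_iff.1 (by omega)
    obtain ⟨S, hS1, hSfvs⟩ := hfvs
    -- the vertex meeting all cycles
    have hvex : ∃ v : V, ∀ u steps, G.IsCycle u steps → v ∈ u :: steps.map Prod.fst := by
      by_cases hSne : S.Nonempty
      · obtain ⟨v0, hv0⟩ := hSne
        refine ⟨v0, fun u steps hc => ?_⟩
        obtain ⟨x, hxS, hxmem⟩ := hSfvs u steps hc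
        rwa [Finset.card_le_one.1 hS1 x hxS v0 hv0] at hxmem
      · refine ⟨Classical.arbitrary V, fun u steps hc => ?_⟩
        obtain ⟨x, hxS, -⟩ := hSfvs u steps hc
        rw [Finset.not_nonempty_iff_eq_empty.1 hSne] at hxS
        simp at hxS
    obtain ⟨v, hv⟩ := hvex
    obtain ⟨σ, hσv, hs2, hs3⟩ := exists_sigma hv hpos hstrong
    have hsimple := simple_of_sigma (v := v) hs2 hs3
    -- the chain to a vertex with two in-neighbours
    obtain ⟨c, ch, ka, kb, hqnd, hqlast, hqch, hkab, hka, hkb⟩ :=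
      build_chain hv hstrong hnotcycle hbig hsimple (Fintype.card V + 1) v []
        (by simp) (by simp) List.Chain.nil (by simp)
    -- select k1, k2 with: Arc k1 c, Arc k2 c, k2 ≠ v, ¬ ReflTransGen (DArc G v) k2 k1
    have hsel : ∃ k1 k2, G.Arc k1 c ∧ G.Arc k2 c ∧ k2 ≠ v ∧
        ¬ Relation.ReflTransGen (DArc G v) k2 k1 := by
      by_cases hkav : ka = v
      · refine ⟨ka, kb, hka, hkb, fun h => hkab (hkav.trans h.symm), fun h => ?_⟩
        have hkbv : kb = v := ra_to_v (hkav ▸ h)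
        exact hkab (hkav.trans hkbv.symm)
      · by_cases hkbv : kb = v
        · refine ⟨kb, ka, hkb, hka, hkav, fun h => ?_⟩
          exact hkav (ra_to_v (hkbv ▸ h))
        · by_cases hrab : Relation.ReflTransGen (DArc G v) kb ka
          · refine ⟨kb, ka, hkb, hka, hkav, fun h => ?_⟩
            -- RA ka kb and RA kb ka: TransGen cycle
            rcases Relation.ReflTransGen.cases_head h with heq | ⟨m, hstep, hrest⟩
            · exact hkab heq
            · exact darc_transGen_irrefl hv ka
                (Relation.TransGen.head' hstep (hrest.trans hrab))
          · exact ⟨ka, kb, hka, hkb, hkbv, hrab⟩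
    obtain ⟨k1, k2, hk1arc, hk2arc, hk2v, hk2ra⟩ := hsel
    have hk1v_ra : ∀ x, x ≠ v → Relation.ReflTransGen (DArc G v) x k1 → k1 ≠ v := by
      intro x hx hra hk1v
      exact hx (ra_to_v (hk1v ▸ hra))
    -- c ≠ v iff ch nonempty facts
    have hchnd : ch.Nodup := (List.nodup_cons.1 hqnd).2
    have hcch : c ∉ ch := (List.nodup_cons.1 hqnd).1
    have hcv_of_ch : ch ≠ [] → c ≠ v := by
      intro hne hcv
      have : ch.getLastD c = v := by rw [← List.getLastD_cons]; exact hqlast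
      exact hcch (hcv ▸ (this ▸ getLastD_mem hne c))
    -- the ancestor set
    set Anc : Finset V :=
      Finset.univ.filter (fun j => j ≠ v ∧ Relation.ReflTransGen (DArc G v) j k1) with hAncdef
    have hAncmem : ∀ j, j ∈ Anc ↔ (j ≠ v ∧ Relation.ReflTransGen (DArc G v) j k1) := by
      intro j
      rw [hAncdef, Finset.mem_filter]
      simp
    have hAncv : v ∉ Anc := fun h => ((hAncmem v).1 h).1 rfl
    have hk2Anc : k2 ∉ Anc := fun h => hk2ra ((hAncmem k2).1 h).2
    have hk1Anc : k1 ≠ v → k1 ∈ Anc := fun h => (hAncmem k1).2 ⟨h, Relation.ReflTransGen.refl⟩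
    have hAncclosed : ∀ j' j, G.Arc j' j → j ∈ Anc → j' = v ∨ j' ∈ Anc := by
      intro j' j harc hj
      obtain ⟨hjv, hjra⟩ := (hAncmem j).1 hj
      by_cases hj'v : j' = v
      · exact Or.inl hj'v
      · exact Or.inr ((hAncmem j').2 ⟨hj'v, Relation.ReflTransGen.head ⟨hj'v, hjv, harc⟩ hjra⟩)
    have hcAnc : c ∉ Anc := by
      intro h
      obtain ⟨hcv, hcra⟩ := (hAncmem c).1 h
      have hk1v : k1 ≠ v := hk1v_ra c hcv hcra
      exact darc_transGen_irrefl hv c (Relation.TransGen.tail' hcra ⟨hk1v, hcv, hk1arc⟩)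
    have hchAnc : ∀ p ∈ ch, p ∉ Anc := by
      intro p hp hpA
      obtain ⟨hpv, hpra⟩ := (hAncmem p).1 hpA
      have hk1v : k1 ≠ v := hk1v_ra p hpv hpra
      have hchne : ch ≠ [] := fun h => by simp [h] at hp
      have hcv : c ≠ v := hcv_of_ch hchne
      obtain ⟨d1, d2, hd⟩ := List.append_of_mem hp
      have hd2ne : d2 ≠ [] := by
        intro h
        rw [h] at hd
        have : ch.getLastD c = v := by rw [← List.getLastD_cons]; exact hqlast
        rw [hd, List.getLastD_concat] at this
        exact hpv this
      have hdlch : ch.dropLast = d1 ++ p :: d2.dropLast := by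
        rw [hd, show d1 ++ p :: d2 = (d1 ++ [p]) ++ d2 by simp,
          List.dropLast_append_of_ne_nil hd2ne]
        simp
      have hlastv : ch.getLastD c = v := by rw [← List.getLastD_cons]; exact hqlast
      have hnm := not_mem_dropLast_of_nodup hchnd hchne c
      rw [hlastv, hdlch] at hnm
      have hd1v : ∀ y ∈ d1 ++ [p], y ≠ v := by
        intro y hy hyv
        rw [hyv] at hy
        rcases List.mem_append.1 hy with hmem | hmem
        · exact hnm (List.mem_append_left _ hmem)
        · simp at hmem
          exact hpv hmem.symm
      -- transGen from c to p along the chain, then to k1, then back to c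
      have hchArc : List.Chain G.Arc c ch := List.IsChain.imp (fun _ _ h => h.1) hqch
      rw [hd] at hchArc
      have hpre := ((List.isChain_cons_split (l₁ := d1) (c := p) (l₂ := d2)).1 hchArc).1
      have htg1 : Relation.TransGen (DArc G v) c p := by
        have := chain_transGen hpre (by simp) hcv hd1v
        rwa [List.getLastD_concat] at this
      exact darc_transGen_irrefl hv c
        (htg1.trans (Relation.TransGen.tail' hpra ⟨hk1v, hcv, hk1arc⟩))
    -- the two sweeps
    obtain ⟨L0, hL0nd, hL0mem, hL0len, hL0dyn⟩ :=
      sweep hv hstrong hbig hs2 (Finset.univ.erase v).card (Finset.univ.erase v) rfl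
        (Finset.notMem_erase v _)
    obtain ⟨L1, hL1nd, hL1mem, hL1len, hL1dyn⟩ :=
      sweep hv hstrong hbig hs2 Anc.card Anc rfl hAncv
    refine ⟨L0 ++ v :: (L1 ++ c :: (ch ++ L0)), ?_, ?_⟩
    · -- length bound
      have hL0c : L0.length = Fintype.card V - 1 := by
        rw [hL0len, Finset.card_erase_of_mem (Finset.mem_univ v), Finset.card_univ]
      have hdisj : ((c :: ch) ++ Anc.toList).Nodup := by
        rw [List.nodup_append]
        refine ⟨hqnd, Anc.nodup_toList, ?_⟩
        intro y hy z hyA hyz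
        subst hyz
        have hyAnc : y ∈ Anc := Finset.mem_toList.1 hyA
        rcases List.mem_cons.1 hy with rfl | hmem
        · exact hcAnc hyAnc
        · exact hchAnc y hmem hyAnc
      have hlen2 := hdisj.length_le_card
      simp only [List.length_append, List.length_cons, Finset.length_toList] at hlen2
      simp only [List.length_append, List.length_cons, hL0c, hL1len]
      omega
    · -- dynamics
      rintro f ⟨hbn, hao⟩
      have hcard1 : 1 < Fintype.card V := hbig
      obtain ⟨γ, hγ⟩ := update_disagree hs2 hs3 hao hk1arc hk2arc
      -- step A: first sweep aligns everything to x v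
      have stepA : ∀ x : V → Bool, wordUpdate f L0 x = fun j => ((x v) == σ j) := by
        intro x
        have hpre : ∀ j, j ∉ Finset.univ.erase v → (∃ i ∈ Finset.univ.erase v, G.Arc j i) →
            x j = ((x v) == σ j) := by
          intro j hj _
          have hjv : j = v := by
            by_contra hne
            exact hj (Finset.mem_erase.2 ⟨hne, Finset.mem_univ j⟩)
          subst hjv
          rw [hσv, beq_true']
        rw [hL0dyn f hao x (x v) hpre]
        funext j
        by_cases hjv : j = v
        · subst hjv
          rw [if_neg (Finset.notMem_erase j _), hσv, beq_true']
        · rw [if_pos (Finset.mem_erase.2 ⟨hjv, Finset.mem_univ j⟩)]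
      -- step B: update v
      have stepB : ∀ b : Bool, localUpdate f v (fun j => (b == σ j)) =
          Function.update (fun j => (b == σ j)) v (!b) := by
        intro b
        have : f (fun j => (b == σ j)) v = !b :=
          update_v hs3 hao (no_source hstrong hcard1 v) (fun j _ => rfl)
        funext j
        rw [localUpdate_apply, Function.update_apply, this]
      -- step C: sweep the ancestors of k1
      have stepC : ∀ b : Bool,
          wordUpdate f L1 (Function.update (fun j => (b == σ j)) v (!b)) =
          fun j => if j ∈ Anc then ((!b) == σ j)
            else Function.update (fun j' => (b == σ j')) v (!b) j := by
        intro b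
        refine hL1dyn f hao _ (!b) ?_
        intro j hj ⟨i, hiA, harc⟩
        rcases hAncclosed j i harc hiA with rfl | hjA
        · rw [Function.update_apply, if_pos rfl, hσv, beq_true']
        · exact absurd hjA hj
      -- step D: update c creates a constant
      have stepD : ∀ b : Bool,
          localUpdate f c (fun j => if j ∈ Anc then ((!b) == σ j)
            else Function.update (fun j' => (b == σ j')) v (!b) j) =
          Function.update (fun j => if j ∈ Anc then ((!b) == σ j)
            else Function.update (fun j' => (b == σ j')) v (!b) j) c γ := by
        intro b
        have hx3k1 : (fun j => if j ∈ Anc then ((!b) == σ j)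
            else Function.update (fun j' => (b == σ j')) v (!b) j) k1 = ((!b) == σ k1) := by
          show (if k1 ∈ Anc then ((!b) == σ k1)
            else Function.update (fun j' => (b == σ j')) v (!b) k1) = ((!b) == σ k1)
          by_cases hk1v : k1 = v
          · rw [if_neg (show k1 ∉ Anc by rw [hk1v]; exact hAncv), Function.update_apply,
              if_pos hk1v, hk1v, hσv, beq_true']
          · rw [if_pos (hk1Anc hk1v)]
        have hx3k2 : (fun j => if j ∈ Anc then ((!b) == σ j)
            else Function.update (fun j' => (b == σ j')) v (!b) j) k2 = (b == σ k2) := by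
          show (if k2 ∈ Anc then ((!b) == σ k2)
            else Function.update (fun j' => (b == σ j')) v (!b) k2) = (b == σ k2)
          rw [if_neg hk2Anc, Function.update_apply, if_neg hk2v]
        have := hγ b (fun j => if j ∈ Anc then ((!b) == σ j)
            else Function.update (fun j' => (b == σ j')) v (!b) j) hx3k1 hx3k2
        funext j
        rw [localUpdate_apply, this]
        simp [Function.update_apply]
      -- step E: walking down the chain preserves agreement at v
      have stepE :
          (wordUpdate f ch (Function.update (fun j => if j ∈ Anc then ((!false) == σ j)
            else Function.update (fun j' => (false == σ j')) v (!false) j) c γ)) v =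
          (wordUpdate f ch (Function.update (fun j => if j ∈ Anc then ((!true) == σ j)
            else Function.update (fun j' => (true == σ j')) v (!true) j) c γ)) v := by
        have hlast : ch.getLastD c = v := by rw [← List.getLastD_cons]; exact hqlast
        have := chain_agree hao ch c
          (Function.update (fun j => if j ∈ Anc then ((!false) == σ j)
            else Function.update (fun j' => (false == σ j')) v (!false) j) c γ)
          (Function.update (fun j => if j ∈ Anc then ((!true) == σ j)
            else Function.update (fun j' => (true == σ j')) v (!true) j) c γ)
          hqch
          (by rw [Function.update_self, Function.update_self])
        rw [hlast] at this
        exact this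
      -- step F: final sweep
      have stepF : ∀ y : V → Bool, wordUpdate f L0 y = fun j => ((y v) == σ j) := stepA
      -- put it all together
      have total : ∀ x : V → Bool,
          wordUpdate f (L0 ++ v :: (L1 ++ c :: (ch ++ L0))) x =
          fun j => (((wordUpdate f ch (Function.update
            (fun j' => if j' ∈ Anc then ((!(x v)) == σ j')
              else Function.update (fun j'' => ((x v) == σ j'')) v (!(x v)) j') c γ)) v) == σ j) := by
        intro x
        rw [wordUpdate_append, stepA x, wordUpdate_cons, stepB (x v), wordUpdate_append,
          stepC (x v), wordUpdate_cons, stepD (x v), wordUpdate_append, stepF]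
      refine ⟨fun j => (((wordUpdate f ch (Function.update
          (fun j' => if j' ∈ Anc then ((!false) == σ j')
            else Function.update (fun j'' => (false == σ j'')) v (!false) j') c γ)) v) == σ j),
        fun x => ?_⟩
      rw [total x]
      cases hxv : x v
      · rfl
      · rw [stepE]
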